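/- (CUR-type reconstruction) Let A be an m×n complex matrix, let C be an m×c complex matrix whose column space equals the column space of A, and let R be an r×n complex matrix such that the column space of Rᴴ equals the column space of Aᴴ. If Z_C is a Moore–Penrose pseudoinverse of C and Z_R is a Moore–Penrose pseudoinverse of R, then A = C·Z_C·A·Z_R·R. -/
import Mathlib


open Matrix

/-- `Z` is a Moore–Penrose pseudoinverse of `M`: it satisfies the four Penrose equations. -/
def IsMoorePenrose {m n : ℕ} (M : Matrix (Fin m) (Fin n) ℂ)
    (Z : Matrix (Fin n) (Fin m) ℂ) : Prop :=
  M * Z * M = M ∧ Z * M * Z = Z ∧ (M * Z)ᴴ = M * Z ∧ (Z * M)ᴴ = Z * M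

lemma exists_factor {m n c : ℕ} (A : Matrix (Fin m) (Fin n) ℂ) (C : Matrix (Fin m) (Fin c) ℂ)
    (h : LinearMap.range A.mulVecLin ≤ LinearMap.range C.mulVecLin) :
    ∃ B : Matrix (Fin c) (Fin n) ℂ, A = C * B := by
  have hcol : ∀ j : Fin n, ∃ b : Fin c → ℂ, C *ᵥ b = A *ᵥ Pi.single j 1 := by
    intro j
    have : A *ᵥ Pi.single j 1 ∈ LinearMap.range C.mulVecLin :=
      h ⟨Pi.single j 1, rfl⟩
    obtain ⟨b, hb⟩ := this
    exact ⟨b, hb⟩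
  choose b hb using hcol
  refine ⟨Matrix.of fun i j => b j i, ?_⟩
  ext i j
  have := congrFun (hb j) i
  simp only [mulVec, dotProduct, Pi.single_apply, mul_ite, mul_one, mul_zero,
    Finset.sum_ite_eq', Finset.mem_univ, if_true] at this
  simp [Matrix.mul_apply, ← this, mulVec, dotProduct]

theorem cur_type_reconstruction
    {m n c r : ℕ}
    (A : Matrix (Fin m) (Fin n) ℂ)
    (C : Matrix (Fin m) (Fin c) ℂ)
    (hC : LinearMap.range C.mulVecLin = LinearMap.range A.mulVecLin)
    (R : Matrix (Fin r) (Fin n) ℂ)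
    (hR : LinearMap.range Rᴴ.mulVecLin = LinearMap.range Aᴴ.mulVecLin)
    (ZC : Matrix (Fin c) (Fin m) ℂ) (hZC : IsMoorePenrose C ZC)
    (ZR : Matrix (Fin n) (Fin r) ℂ) (hZR : IsMoorePenrose R ZR) :
    A = C * ZC * A * ZR * R := by
  obtain ⟨B, hB⟩ := exists_factor A C hC.ge
  obtain ⟨D, hD⟩ := exists_factor Aᴴ Rᴴ hR.ge
  have h1 : C * ZC * A = A := by
    rw [hB, ← Matrix.mul_assoc, hZC.1]
  have hA : A = Dᴴ * R := by
    calc A = Aᴴᴴ := by rw [conjTranspose_conjTranspose]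
    _ = Dᴴ * R := by rw [hD, conjTranspose_mul, conjTranspose_conjTranspose]
  have h2 : A * ZR * R = A := by
    rw [hA]
    rw [Matrix.mul_assoc, Matrix.mul_assoc, ← Matrix.mul_assoc R, hZR.1]
  rw [h1, h2]
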